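/- The program P_Φ constructed from a QBF Φ = ∀X∃Y∀Z φ (φ in DNF, each disjunct containing a variable from each of X, Y, Z) has as classical models exactly: U = X ∪ Y ∪ Z ∪ X̄ ∪ Ȳ ∪ Z̄ ∪ {u,v,w}, and for each I ⊆ X and J ⊆ Y, the sets M[I,J] = I ∪ (X\I)‾ ∪ J ∪ (Y\J)‾ ∪ Z ∪ Z̄ ∪ {u,v} and M'[I,J] = I ∪ (X\I)‾ ∪ J ∪ (Y\J)‾ ∪ Z ∪ Z̄ ∪ {v,w}. -/

import Mathlib

structure Rule (A : Type) where
  head : Set A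
  pos : Set A
  neg : Set A

abbrev Program (A : Type) := Set (Rule A)

def satRule {A : Type} (I : Set A) (r : Rule A) : Prop :=
  r.pos ⊆ I → r.neg ∩ I = ∅ → (r.head ∩ I).Nonempty

def isModel {A : Type} (P : Program A) (I : Set A) : Prop := ∀ r ∈ P, satRule I r

def reduct {A : Type} (P : Program A) (K : Set A) : Program A :=
  {r' | ∃ r ∈ P, r.neg ∩ K = ∅ ∧ r' = ⟨r.head, r.pos, ∅⟩}

def isAnswerSet {A : Type} (P : Program A) (M : Set A) : Prop :=
  isModel (reduct P M) M ∧ ∀ N ⊆ M, isModel (reduct P M) N → N = M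

def factsOf {A : Type} (F : Set A) : Program A := {r | ∃ a ∈ F, r = ⟨{a}, ∅, ∅⟩}

def superCoherent {A : Type} (P : Program A) : Prop :=
  ∀ F : Set A, ∃ M, isAnswerSet (P ∪ factsOf F) M

def atomsOf {A : Type} (P : Program A) : Set A :=
  ⋃ r ∈ P, (r.head ∪ r.pos ∪ r.neg)

def Uall {A : Type} (X Y Z : Set A) (bar : A → A) (u v w : A) : Set A :=
  X ∪ Y ∪ Z ∪ bar '' X ∪ bar '' Y ∪ bar '' Z ∪ {u, v, w}

def Mmod {A : Type} (X Y Z : Set A) (bar : A → A) (u v : A) (I J : Set A) : Set A :=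
  I ∪ bar '' (X \ I) ∪ J ∪ bar '' (Y \ J) ∪ Z ∪ bar '' Z ∪ {u, v}

def Mmod' {A : Type} (X Y Z : Set A) (bar : A → A) (v w : A) (I J : Set A) : Set A :=
  I ∪ bar '' (X \ I) ∪ J ∪ bar '' (Y \ J) ∪ Z ∪ bar '' Z ∪ {v, w}

def Omod {A : Type} (X : Set A) (bar : A → A) (I : Set A) : Set A := I ∪ bar '' (X \ I)

def Nmod {A : Type} (X Y Z : Set A) (bar : A → A) (v : A) (I J K : Set A) : Set A :=
  I ∪ bar '' (X \ I) ∪ J ∪ bar '' (Y \ J) ∪ K ∪ bar '' (Z \ K) ∪ {v}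

/-- The program P_Φ for a QBF ∀X∃Y∀Z φ, where φ is a DNF given by the set D of
disjuncts, each disjunct d being a pair (positive variables, negated variables). -/
def PPhi {A : Type} (X Y Z : Set A) (bar : A → A) (u v w : A)
    (D : Set (Set A × Set A)) : Program A :=
  {r | ∃ x ∈ X, r = ⟨{x, bar x}, ∅, ∅⟩ ∨ r = ⟨{u}, {x, bar x}, ∅⟩ ∨
       r = ⟨{w}, {x, bar x}, ∅⟩ ∨ r = ⟨{x}, {u, w}, ∅⟩ ∨ r = ⟨{bar x}, {u, w}, ∅⟩} ∪
  {r | ∃ y ∈ Y, r = ⟨{y, bar y}, {v}, ∅⟩ ∨ r = ⟨{u}, {y, bar y}, ∅⟩ ∨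
       r = ⟨{w}, {y, bar y}, ∅⟩ ∨ r = ⟨{y}, {u, w}, ∅⟩ ∨ r = ⟨{bar y}, {u, w}, ∅⟩ ∨
       r = ⟨{v}, {y}, ∅⟩ ∨ r = ⟨{v}, {bar y}, ∅⟩} ∪
  {r | ∃ z ∈ Z, r = ⟨{z, bar z}, {v}, ∅⟩ ∨ r = ⟨{u}, {z}, {w}⟩ ∨ r = ⟨{u}, {bar z}, {w}⟩ ∨
       r = ⟨{v}, {z}, ∅⟩ ∨ r = ⟨{v}, {bar z}, ∅⟩ ∨ r = ⟨{z}, {w}, ∅⟩ ∨ r = ⟨{bar z}, {w}, ∅⟩ ∨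
       r = ⟨{z}, {u}, ∅⟩ ∨ r = ⟨{bar z}, {u}, ∅⟩ ∨ r = ⟨{w, u}, {z, bar z}, ∅⟩} ∪
  {r | ∃ d ∈ D, r = ⟨{w, u}, d.1 ∪ bar '' d.2, ∅⟩} ∪
  {⟨{v}, {w}, ∅⟩, ⟨{v}, {u}, ∅⟩, ⟨{v}, ∅, {u}⟩}


lemma mem_Mmod_iff {A : Type} {X Y Z : Set A} {bar : A → A} {p q : A} {I J : Set A} {a : A} :
    a ∈ Mmod X Y Z bar p q I J ↔
      a ∈ I ∨ a ∈ bar '' (X \ I) ∨ a ∈ J ∨ a ∈ bar '' (Y \ J) ∨ a ∈ Z ∨ a ∈ bar '' Z ∨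
        a = p ∨ a = q := by
  simp only [Mmod, Set.mem_union, Set.mem_insert_iff, Set.mem_singleton_iff]
  tauto

lemma mem_Uall_iff {A : Type} {X Y Z : Set A} {bar : A → A} {u v w : A} {a : A} :
    a ∈ Uall X Y Z bar u v w ↔
      a ∈ X ∨ a ∈ Y ∨ a ∈ Z ∨ a ∈ bar '' X ∨ a ∈ bar '' Y ∨ a ∈ bar '' Z ∨
        a = u ∨ a = v ∨ a = w := by
  simp only [Uall, Set.mem_union, Set.mem_insert_iff, Set.mem_singleton_iff]
  tauto

lemma Mmod'_eq_Mmod {A : Type} (X Y Z : Set A) (bar : A → A) (v w : A) (I J : Set A) :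
    Mmod' X Y Z bar v w I J = Mmod X Y Z bar v w I J := rfl
/-- The classical models of P_Φ are exactly U, and M[I,J], M'[I,J] for I ⊆ X, J ⊆ Y. -/
theorem PPhi_models {A : Type}
    (X Y Z : Set A) (bar : A → A) (u v w : A) (D : Set (Set A × Set A))
    (hXne : X.Nonempty) (hYne : Y.Nonempty) (hZne : Z.Nonempty)
    (hXY : Disjoint X Y) (hXZ : Disjoint X Z) (hYZ : Disjoint Y Z)
    (hbarinj : Function.Injective bar)
    (hbarfresh : Disjoint (bar '' (X ∪ Y ∪ Z)) (X ∪ Y ∪ Z))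
    (huv : u ≠ v) (huw : u ≠ w) (hvw : v ≠ w)
    (hufresh : u ∉ X ∪ Y ∪ Z ∪ bar '' (X ∪ Y ∪ Z))
    (hvfresh : v ∉ X ∪ Y ∪ Z ∪ bar '' (X ∪ Y ∪ Z))
    (hwfresh : w ∉ X ∪ Y ∪ Z ∪ bar '' (X ∪ Y ∪ Z))
    (hDvars : ∀ d ∈ D, d.1 ∪ d.2 ⊆ X ∪ Y ∪ Z)
    (hDall : ∀ d ∈ D, ((d.1 ∪ d.2) ∩ X).Nonempty ∧ ((d.1 ∪ d.2) ∩ Y).Nonempty ∧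
       ((d.1 ∪ d.2) ∩ Z).Nonempty) :
    ∀ M ⊆ Uall X Y Z bar u v w,
      (isModel (PPhi X Y Z bar u v w D) M ↔
        (M = Uall X Y Z bar u v w ∨ ∃ I, I ⊆ X ∧ ∃ J, J ⊆ Y ∧
          (M = Mmod X Y Z bar u v I J ∨ M = Mmod' X Y Z bar v w I J))) := by
  -- abbreviations
  intro M hMsub
  -- basic freshness helpers
  have hdXY := Set.disjoint_left.mp hXY
  have hdXZ := Set.disjoint_left.mp hXZ
  have hdYZ := Set.disjoint_left.mp hYZ
  have hnotbar : ∀ a ∈ X ∪ Y ∪ Z, ∀ S ⊆ X ∪ Y ∪ Z, a ∉ bar '' S := by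
    intro a ha S hS hmem
    exact Set.disjoint_left.mp hbarfresh (Set.image_mono hS hmem) ha
  have hbarnot : ∀ a ∈ X ∪ Y ∪ Z, ∀ S ⊆ X ∪ Y ∪ Z, bar a ∉ S := by
    intro a ha S hS hmem
    exact Set.disjoint_left.mp hbarfresh ⟨a, ha, rfl⟩ (hS hmem)
  have hbarmem : ∀ (a : A) (S : Set A), bar a ∈ bar '' S ↔ a ∈ S :=
    fun a S => hbarinj.mem_set_image
  have hbarne : ∀ a ∈ X ∪ Y ∪ Z, ∀ t, t ∉ X ∪ Y ∪ Z ∪ bar '' (X ∪ Y ∪ Z) → bar a ≠ t := by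
    intro a ha t ht h
    exact ht (Or.inr ⟨a, ha, h⟩)
  have hfne : ∀ t, t ∉ X ∪ Y ∪ Z ∪ bar '' (X ∪ Y ∪ Z) → ∀ S ⊆ X ∪ Y ∪ Z, t ∉ S :=
    fun t ht S hS h => ht (Or.inl (hS h))
  have hfneb : ∀ t, t ∉ X ∪ Y ∪ Z ∪ bar '' (X ∪ Y ∪ Z) → ∀ S ⊆ X ∪ Y ∪ Z, t ∉ bar '' S :=
    fun t ht S hS h => ht (Or.inr (Set.image_mono hS h))
  have hXs : X ⊆ X ∪ Y ∪ Z := fun a ha => Or.inl (Or.inl ha)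
  have hYs : Y ⊆ X ∪ Y ∪ Z := fun a ha => Or.inl (Or.inr ha)
  have hZs : Z ⊆ X ∪ Y ∪ Z := fun a ha => Or.inr ha
  -- membership facts for Mmod with a fresh pair (p, q)
  have Mfacts : ∀ p q : A, p ∉ X ∪ Y ∪ Z ∪ bar '' (X ∪ Y ∪ Z) →
      q ∉ X ∪ Y ∪ Z ∪ bar '' (X ∪ Y ∪ Z) → ∀ I J : Set A, I ⊆ X → J ⊆ Y →
      ((∀ x ∈ X, (x ∈ Mmod X Y Z bar p q I J ↔ x ∈ I)) ∧
       (∀ x ∈ X, (bar x ∈ Mmod X Y Z bar p q I J ↔ x ∉ I)) ∧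
       (∀ y ∈ Y, (y ∈ Mmod X Y Z bar p q I J ↔ y ∈ J)) ∧
       (∀ y ∈ Y, (bar y ∈ Mmod X Y Z bar p q I J ↔ y ∉ J)) ∧
       (∀ z ∈ Z, z ∈ Mmod X Y Z bar p q I J) ∧
       (∀ z ∈ Z, bar z ∈ Mmod X Y Z bar p q I J) ∧
       p ∈ Mmod X Y Z bar p q I J ∧ q ∈ Mmod X Y Z bar p q I J ∧
       (∀ t, t ∉ X ∪ Y ∪ Z ∪ bar '' (X ∪ Y ∪ Z) → t ≠ p → t ≠ q →
          t ∉ Mmod X Y Z bar p q I J)) := by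
    intro p q hp hq I J hI hJ
    have hIs : I ⊆ X ∪ Y ∪ Z := fun a ha => hXs (hI ha)
    have hJs : J ⊆ X ∪ Y ∪ Z := fun a ha => hYs (hJ ha)
    have hXIs : X \ I ⊆ X ∪ Y ∪ Z := fun a ha => hXs ha.1
    have hYJs : Y \ J ⊆ X ∪ Y ∪ Z := fun a ha => hYs ha.1
    refine ⟨?_, ?_, ?_, ?_, ?_, ?_, ?_, ?_, ?_⟩
    · intro x hx
      have hx' := hXs hx
      rw [mem_Mmod_iff]
      constructor
      · rintro (h|h|h|h|h|h|h|h)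
        · exact h
        · exact absurd h (hnotbar x hx' _ hXIs)
        · exact absurd (hJ h) (hdXY hx)
        · exact absurd h (hnotbar x hx' _ hYJs)
        · exact absurd h (hdXZ hx)
        · exact absurd h (hnotbar x hx' _ hZs)
        · exact absurd hx' (h ▸ hp ∘ Or.inl)
        · exact absurd hx' (h ▸ hq ∘ Or.inl)
      · exact fun h => Or.inl h
    · intro x hx
      have hx' := hXs hx
      rw [mem_Mmod_iff]
      constructor
      · rintro (h|h|h|h|h|h|h|h)
        · exact absurd h (hbarnot x hx' _ hIs)
        · exact fun hxI => ((hbarmem x _).mp h).2 hxI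
        · exact absurd h (hbarnot x hx' _ hJs)
        · exact absurd ((hbarmem x _).mp h).1 (hdXY hx)
        · exact absurd h (hbarnot x hx' _ hZs)
        · exact absurd ((hbarmem x _).mp h) (hdXZ hx)
        · exact absurd h (hbarne x hx' p hp)
        · exact absurd h (hbarne x hx' q hq)
      · exact fun h => Or.inr (Or.inl ((hbarmem x _).mpr ⟨hx, h⟩))
    · intro y hy
      have hy' := hYs hy
      rw [mem_Mmod_iff]
      constructor
      · rintro (h|h|h|h|h|h|h|h)
        · exact absurd hy (hdXY (hI h))
        · exact absurd h (hnotbar y hy' _ hXIs)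
        · exact h
        · exact absurd h (hnotbar y hy' _ hYJs)
        · exact absurd h (hdYZ hy)
        · exact absurd h (hnotbar y hy' _ hZs)
        · exact absurd hy' (h ▸ hp ∘ Or.inl)
        · exact absurd hy' (h ▸ hq ∘ Or.inl)
      · exact fun h => Or.inr (Or.inr (Or.inl h))
    · intro y hy
      have hy' := hYs hy
      rw [mem_Mmod_iff]
      constructor
      · rintro (h|h|h|h|h|h|h|h)
        · exact absurd h (hbarnot y hy' _ hIs)
        · exact absurd hy (hdXY ((hbarmem y _).mp h).1)
        · exact absurd h (hbarnot y hy' _ hJs)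
        · exact fun hyJ => ((hbarmem y _).mp h).2 hyJ
        · exact absurd h (hbarnot y hy' _ hZs)
        · exact absurd ((hbarmem y _).mp h) (hdYZ hy)
        · exact absurd h (hbarne y hy' p hp)
        · exact absurd h (hbarne y hy' q hq)
      · exact fun h => Or.inr (Or.inr (Or.inr (Or.inl ((hbarmem y _).mpr ⟨hy, h⟩))))
    · exact fun z hz => mem_Mmod_iff.mpr (Or.inr (Or.inr (Or.inr (Or.inr (Or.inl hz)))))
    · exact fun z hz =>
        mem_Mmod_iff.mpr (Or.inr (Or.inr (Or.inr (Or.inr (Or.inr (Or.inl ⟨z, hz, rfl⟩))))))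
    · exact mem_Mmod_iff.mpr
        (Or.inr (Or.inr (Or.inr (Or.inr (Or.inr (Or.inr (Or.inl rfl)))))))
    · exact mem_Mmod_iff.mpr
        (Or.inr (Or.inr (Or.inr (Or.inr (Or.inr (Or.inr (Or.inr rfl)))))))
    · intro t ht hp' hq' hmem
      rcases mem_Mmod_iff.mp hmem with h|h|h|h|h|h|h|h
      · exact hfne t ht _ hIs h
      · exact hfneb t ht _ hXIs h
      · exact hfne t ht _ hJs h
      · exact hfneb t ht _ hYJs h
      · exact hfne t ht _ hZs h
      · exact hfneb t ht _ hZs h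
      · exact hp' h
      · exact hq' h
  -- rule membership helpers
  have inP1 : ∀ {r : Rule A} {x : A}, x ∈ X →
      (r = ⟨{x, bar x}, ∅, ∅⟩ ∨ r = ⟨{u}, {x, bar x}, ∅⟩ ∨ r = ⟨{w}, {x, bar x}, ∅⟩ ∨
       r = ⟨{x}, {u, w}, ∅⟩ ∨ r = ⟨{bar x}, {u, w}, ∅⟩) → r ∈ PPhi X Y Z bar u v w D :=
    fun hx h => Or.inl (Or.inl (Or.inl (Or.inl ⟨_, hx, h⟩)))
  have inP2 : ∀ {r : Rule A} {y : A}, y ∈ Y →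
      (r = ⟨{y, bar y}, {v}, ∅⟩ ∨ r = ⟨{u}, {y, bar y}, ∅⟩ ∨ r = ⟨{w}, {y, bar y}, ∅⟩ ∨
       r = ⟨{y}, {u, w}, ∅⟩ ∨ r = ⟨{bar y}, {u, w}, ∅⟩ ∨ r = ⟨{v}, {y}, ∅⟩ ∨
       r = ⟨{v}, {bar y}, ∅⟩) → r ∈ PPhi X Y Z bar u v w D :=
    fun hy h => Or.inl (Or.inl (Or.inl (Or.inr ⟨_, hy, h⟩)))
  have inP3 : ∀ {r : Rule A} {z : A}, z ∈ Z →
      (r = ⟨{z, bar z}, {v}, ∅⟩ ∨ r = ⟨{u}, {z}, {w}⟩ ∨ r = ⟨{u}, {bar z}, {w}⟩ ∨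
       r = ⟨{v}, {z}, ∅⟩ ∨ r = ⟨{v}, {bar z}, ∅⟩ ∨ r = ⟨{z}, {w}, ∅⟩ ∨
       r = ⟨{bar z}, {w}, ∅⟩ ∨ r = ⟨{z}, {u}, ∅⟩ ∨ r = ⟨{bar z}, {u}, ∅⟩ ∨
       r = ⟨{w, u}, {z, bar z}, ∅⟩) → r ∈ PPhi X Y Z bar u v w D :=
    fun hz h => Or.inl (Or.inl (Or.inr ⟨_, hz, h⟩))
  have inP5 : ∀ {r : Rule A},
      r ∈ ({⟨{v}, {w}, ∅⟩, ⟨{v}, {u}, ∅⟩, ⟨{v}, ∅, {u}⟩} : Set (Rule A)) → r ∈ PPhi X Y Z bar u v w D :=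
    fun h => Or.inr h
  have single : ∀ {a : A} {S : Set A}, (({a} : Set A) ∩ S).Nonempty → a ∈ S := by
    rintro a S ⟨b, hb, hbS⟩
    rw [Set.mem_singleton_iff] at hb
    exact hb ▸ hbS
  constructor
  · -- forward direction
    intro hmod
    -- v ∈ M
    have hvM : v ∈ M := by
      by_cases hu : u ∈ M
      · have h := hmod _ (inP5 (Or.inr (Or.inl rfl)))
        exact single (h (Set.singleton_subset_iff.mpr hu) (Set.empty_inter M))
      · have h := hmod _ (inP5 (Or.inr (Or.inr rfl)))
        exact single (h (Set.empty_subset M) (Set.singleton_inter_eq_empty.mpr hu))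
    have hpair : ∀ {a b : A} {S : Set A}, (({a, b} : Set A) ∩ S).Nonempty → a ∈ S ∨ b ∈ S := by
      rintro a b S ⟨c, hc, hcS⟩
      simp only [Set.mem_insert_iff, Set.mem_singleton_iff] at hc
      rcases hc with rfl|rfl
      · exact Or.inl hcS
      · exact Or.inr hcS
    have hxor : ∀ x ∈ X, x ∈ M ∨ bar x ∈ M := by
      intro x hx
      exact hpair ((hmod _ (inP1 hx (Or.inl rfl))) (Set.empty_subset M) (Set.empty_inter M))
    have hyor : ∀ y ∈ Y, y ∈ M ∨ bar y ∈ M := by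
      intro y hy
      exact hpair ((hmod _ (inP2 hy (Or.inl rfl)))
        (Set.singleton_subset_iff.mpr hvM) (Set.empty_inter M))
    have hzor : ∀ z ∈ Z, z ∈ M ∨ bar z ∈ M := by
      intro z hz
      exact hpair ((hmod _ (inP3 hz (Or.inl rfl)))
        (Set.singleton_subset_iff.mpr hvM) (Set.empty_inter M))
    -- generic equality builder
    have buildEq : ∀ p q : A, p ∈ M → q ∈ M →
        (∀ x ∈ X, ¬(x ∈ M ∧ bar x ∈ M)) → (∀ y ∈ Y, ¬(y ∈ M ∧ bar y ∈ M)) →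
        (∀ z ∈ Z, z ∈ M ∧ bar z ∈ M) →
        ((u = p ∨ u = q) ∨ u ∉ M) → ((v = p ∨ v = q) ∨ v ∉ M) →
        ((w = p ∨ w = q) ∨ w ∉ M) →
        M = Mmod X Y Z bar p q (M ∩ X) (M ∩ Y) := by
      intro p q hpM hqM hxn hyn hzb hucase hvcase hwcase
      ext a
      constructor
      · intro haM
        rcases mem_Uall_iff.mp (hMsub haM) with h|h|h|h|h|h|rfl|rfl|rfl
        · exact mem_Mmod_iff.mpr (Or.inl ⟨haM, h⟩)
        · exact mem_Mmod_iff.mpr (Or.inr (Or.inr (Or.inl ⟨haM, h⟩)))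
        · exact mem_Mmod_iff.mpr (Or.inr (Or.inr (Or.inr (Or.inr (Or.inl h)))))
        · obtain ⟨x, hx, rfl⟩ := h
          have hxnI : x ∉ M ∩ X := fun hc => hxn x hx ⟨hc.1, haM⟩
          exact mem_Mmod_iff.mpr (Or.inr (Or.inl ⟨x, ⟨hx, hxnI⟩, rfl⟩))
        · obtain ⟨y, hy, rfl⟩ := h
          have hynJ : y ∉ M ∩ Y := fun hc => hyn y hy ⟨hc.1, haM⟩
          exact mem_Mmod_iff.mpr (Or.inr (Or.inr (Or.inr (Or.inl ⟨y, ⟨hy, hynJ⟩, rfl⟩))))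
        · obtain ⟨z, hz, rfl⟩ := h
          exact mem_Mmod_iff.mpr (Or.inr (Or.inr (Or.inr (Or.inr (Or.inr (Or.inl ⟨z, hz, rfl⟩))))))
        · rcases hucase with (rfl|rfl)|h
          · exact mem_Mmod_iff.mpr
              (Or.inr (Or.inr (Or.inr (Or.inr (Or.inr (Or.inr (Or.inl rfl)))))))
          · exact mem_Mmod_iff.mpr
              (Or.inr (Or.inr (Or.inr (Or.inr (Or.inr (Or.inr (Or.inr rfl)))))))
          · exact absurd haM h
        · rcases hvcase with (rfl|rfl)|h
          · exact mem_Mmod_iff.mpr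
              (Or.inr (Or.inr (Or.inr (Or.inr (Or.inr (Or.inr (Or.inl rfl)))))))
          · exact mem_Mmod_iff.mpr
              (Or.inr (Or.inr (Or.inr (Or.inr (Or.inr (Or.inr (Or.inr rfl)))))))
          · exact absurd haM h
        · rcases hwcase with (rfl|rfl)|h
          · exact mem_Mmod_iff.mpr
              (Or.inr (Or.inr (Or.inr (Or.inr (Or.inr (Or.inr (Or.inl rfl)))))))
          · exact mem_Mmod_iff.mpr
              (Or.inr (Or.inr (Or.inr (Or.inr (Or.inr (Or.inr (Or.inr rfl)))))))
          · exact absurd haM h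
      · intro ha
        rcases mem_Mmod_iff.mp ha with h|h|h|h|h|h|rfl|rfl
        · exact h.1
        · obtain ⟨x, ⟨hx, hxn'⟩, rfl⟩ := h
          rcases hxor x hx with h'|h'
          · exact absurd ⟨h', hx⟩ hxn'
          · exact h'
        · exact h.1
        · obtain ⟨y, ⟨hy, hyn'⟩, rfl⟩ := h
          rcases hyor y hy with h'|h'
          · exact absurd ⟨h', hy⟩ hyn'
          · exact h'
        · exact (hzb a h).1
        · obtain ⟨z, hz, rfl⟩ := h
          exact (hzb z hz).2
        · exact hpM
        · exact hqM
    by_cases hu : u ∈ M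
    · by_cases hw : w ∈ M
      · -- M = Uall
        left
        refine Set.Subset.antisymm hMsub ?_
        intro a ha
        have huw2 : ({u, w} : Set A) ⊆ M :=
          Set.insert_subset_iff.mpr ⟨hu, Set.singleton_subset_iff.mpr hw⟩
        rcases mem_Uall_iff.mp ha with h|h|h|h|h|h|rfl|rfl|rfl
        · have hs := hmod _ (inP1 h (Or.inr (Or.inr (Or.inr (Or.inl rfl)))))
          exact single (hs huw2 (Set.empty_inter M))
        · have hs := hmod _ (inP2 h (Or.inr (Or.inr (Or.inr (Or.inl rfl)))))
          exact single (hs huw2 (Set.empty_inter M))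
        · have hs := hmod _ (inP3 h (Or.inr (Or.inr (Or.inr (Or.inr (Or.inr (Or.inl rfl)))))))
          exact single (hs (Set.singleton_subset_iff.mpr hw) (Set.empty_inter M))
        · obtain ⟨x, hx, rfl⟩ := h
          have hs := hmod _ (inP1 hx (Or.inr (Or.inr (Or.inr (Or.inr rfl)))))
          exact single (hs huw2 (Set.empty_inter M))
        · obtain ⟨y, hy, rfl⟩ := h
          have hs := hmod _ (inP2 hy (Or.inr (Or.inr (Or.inr (Or.inr (Or.inl rfl))))))
          exact single (hs huw2 (Set.empty_inter M))
        · obtain ⟨z, hz, rfl⟩ := h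
          have hs := hmod _ (inP3 hz
            (Or.inr (Or.inr (Or.inr (Or.inr (Or.inr (Or.inr (Or.inl rfl))))))))
          exact single (hs (Set.singleton_subset_iff.mpr hw) (Set.empty_inter M))
        · exact hu
        · exact hvM
        · exact hw
      · -- M = Mmod u v
        right
        refine ⟨M ∩ X, Set.inter_subset_right, M ∩ Y, Set.inter_subset_right, Or.inl ?_⟩
        have hxn : ∀ x ∈ X, ¬(x ∈ M ∧ bar x ∈ M) := by
          rintro x hx ⟨h1, h2⟩
          have hpos : ({x, bar x} : Set A) ⊆ M :=
            Set.insert_subset_iff.mpr ⟨h1, Set.singleton_subset_iff.mpr h2⟩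
          have hs := hmod _ (inP1 hx (Or.inr (Or.inr (Or.inl rfl))))
          exact hw (single (hs hpos (Set.empty_inter M)))
        have hyn : ∀ y ∈ Y, ¬(y ∈ M ∧ bar y ∈ M) := by
          rintro y hy ⟨h1, h2⟩
          have hpos : ({y, bar y} : Set A) ⊆ M :=
            Set.insert_subset_iff.mpr ⟨h1, Set.singleton_subset_iff.mpr h2⟩
          have hs := hmod _ (inP2 hy (Or.inr (Or.inr (Or.inl rfl))))
          exact hw (single (hs hpos (Set.empty_inter M)))
        have hzb : ∀ z ∈ Z, z ∈ M ∧ bar z ∈ M := by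
          intro z hz
          have hs1 := hmod _ (inP3 hz
            (Or.inr (Or.inr (Or.inr (Or.inr (Or.inr (Or.inr (Or.inr (Or.inl rfl)))))))))
          have hs2 := hmod _ (inP3 hz
            (Or.inr (Or.inr (Or.inr (Or.inr (Or.inr (Or.inr (Or.inr (Or.inr (Or.inl rfl))))))))))
          exact ⟨single (hs1 (Set.singleton_subset_iff.mpr hu) (Set.empty_inter M)),
                 single (hs2 (Set.singleton_subset_iff.mpr hu) (Set.empty_inter M))⟩
        exact buildEq u v hu hvM hxn hyn hzb (Or.inl (Or.inl rfl)) (Or.inl (Or.inr rfl))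
          (Or.inr hw)
    · by_cases hw : w ∈ M
      · -- M = Mmod' = Mmod v w
        right
        refine ⟨M ∩ X, Set.inter_subset_right, M ∩ Y, Set.inter_subset_right, Or.inr ?_⟩
        rw [Mmod'_eq_Mmod]
        have hxn : ∀ x ∈ X, ¬(x ∈ M ∧ bar x ∈ M) := by
          rintro x hx ⟨h1, h2⟩
          have hpos : ({x, bar x} : Set A) ⊆ M :=
            Set.insert_subset_iff.mpr ⟨h1, Set.singleton_subset_iff.mpr h2⟩
          have hs := hmod _ (inP1 hx (Or.inr (Or.inl rfl)))
          exact hu (single (hs hpos (Set.empty_inter M)))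
        have hyn : ∀ y ∈ Y, ¬(y ∈ M ∧ bar y ∈ M) := by
          rintro y hy ⟨h1, h2⟩
          have hpos : ({y, bar y} : Set A) ⊆ M :=
            Set.insert_subset_iff.mpr ⟨h1, Set.singleton_subset_iff.mpr h2⟩
          have hs := hmod _ (inP2 hy (Or.inr (Or.inl rfl)))
          exact hu (single (hs hpos (Set.empty_inter M)))
        have hzb : ∀ z ∈ Z, z ∈ M ∧ bar z ∈ M := by
          intro z hz
          have hs1 := hmod _ (inP3 hz
            (Or.inr (Or.inr (Or.inr (Or.inr (Or.inr (Or.inl rfl)))))))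
          have hs2 := hmod _ (inP3 hz
            (Or.inr (Or.inr (Or.inr (Or.inr (Or.inr (Or.inr (Or.inl rfl))))))))
          exact ⟨single (hs1 (Set.singleton_subset_iff.mpr hw) (Set.empty_inter M)),
                 single (hs2 (Set.singleton_subset_iff.mpr hw) (Set.empty_inter M))⟩
        exact buildEq v w hvM hw hxn hyn hzb (Or.inr hu) (Or.inl (Or.inl rfl))
          (Or.inl (Or.inr rfl))
      · -- impossible: u ∉ M, w ∉ M
        exfalso
        obtain ⟨z, hz⟩ := hZne
        rcases hzor z hz with h|h
        · have hs := hmod _ (inP3 hz (Or.inr (Or.inl rfl)))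
          exact hu (single (hs (Set.singleton_subset_iff.mpr h)
            (Set.singleton_inter_eq_empty.mpr hw)))
        · have hs := hmod _ (inP3 hz (Or.inr (Or.inr (Or.inl rfl))))
          exact hu (single (hs (Set.singleton_subset_iff.mpr h)
            (Set.singleton_inter_eq_empty.mpr hw)))
  · -- backward direction
    intro hM
    have modelBoth : ∀ N : Set A, v ∈ N → (u ∈ N ↔ w ∉ N) →
        (∀ x ∈ X, (x ∈ N ∨ bar x ∈ N) ∧ ¬(x ∈ N ∧ bar x ∈ N)) →
        (∀ y ∈ Y, (y ∈ N ∨ bar y ∈ N) ∧ ¬(y ∈ N ∧ bar y ∈ N)) →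
        (∀ z ∈ Z, z ∈ N ∧ bar z ∈ N) → isModel (PPhi X Y Z bar u v w D) N := by
      intro N hvN hiff hxN hyN hzN r hr
      rcases hr with (((hr|hr)|hr)|hr)|hr
      · obtain ⟨x, hx, h⟩ := hr
        rcases h with rfl|rfl|rfl|rfl|rfl
        · intro _ _
          rcases (hxN x hx).1 with h|h
          · exact ⟨x, Set.mem_insert _ _, h⟩
          · exact ⟨bar x, Set.mem_insert_of_mem _ rfl, h⟩
        · intro hpos _
          exact absurd ⟨hpos (Set.mem_insert _ _), hpos (Set.mem_insert_of_mem _ rfl)⟩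
            (hxN x hx).2
        · intro hpos _
          exact absurd ⟨hpos (Set.mem_insert _ _), hpos (Set.mem_insert_of_mem _ rfl)⟩
            (hxN x hx).2
        · intro hpos _
          exact absurd (hpos (Set.mem_insert_of_mem _ rfl)) (hiff.mp (hpos (Set.mem_insert _ _)))
        · intro hpos _
          exact absurd (hpos (Set.mem_insert_of_mem _ rfl)) (hiff.mp (hpos (Set.mem_insert _ _)))
      · obtain ⟨y, hy, h⟩ := hr
        rcases h with rfl|rfl|rfl|rfl|rfl|rfl|rfl
        · intro _ _
          rcases (hyN y hy).1 with h|h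
          · exact ⟨y, Set.mem_insert _ _, h⟩
          · exact ⟨bar y, Set.mem_insert_of_mem _ rfl, h⟩
        · intro hpos _
          exact absurd ⟨hpos (Set.mem_insert _ _), hpos (Set.mem_insert_of_mem _ rfl)⟩
            (hyN y hy).2
        · intro hpos _
          exact absurd ⟨hpos (Set.mem_insert _ _), hpos (Set.mem_insert_of_mem _ rfl)⟩
            (hyN y hy).2
        · intro hpos _
          exact absurd (hpos (Set.mem_insert_of_mem _ rfl)) (hiff.mp (hpos (Set.mem_insert _ _)))
        · intro hpos _
          exact absurd (hpos (Set.mem_insert_of_mem _ rfl)) (hiff.mp (hpos (Set.mem_insert _ _)))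
        · intro _ _
          exact ⟨v, rfl, hvN⟩
        · intro _ _
          exact ⟨v, rfl, hvN⟩
      · obtain ⟨z, hz, h⟩ := hr
        rcases h with rfl|rfl|rfl|rfl|rfl|rfl|rfl|rfl|rfl|rfl
        · intro _ _
          exact ⟨z, Set.mem_insert _ _, (hzN z hz).1⟩
        · intro _ hneg
          by_cases hwN : w ∈ N
          · exact absurd hneg (by
              intro hneg
              have hww : w ∈ ({w} : Set A) ∩ N := ⟨rfl, hwN⟩
              rw [hneg] at hww
              exact hww)
          · exact ⟨u, rfl, hiff.mpr hwN⟩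
        · intro _ hneg
          by_cases hwN : w ∈ N
          · exact absurd hneg (by
              intro hneg
              have hww : w ∈ ({w} : Set A) ∩ N := ⟨rfl, hwN⟩
              rw [hneg] at hww
              exact hww)
          · exact ⟨u, rfl, hiff.mpr hwN⟩
        · intro _ _
          exact ⟨v, rfl, hvN⟩
        · intro _ _
          exact ⟨v, rfl, hvN⟩
        · intro _ _
          exact ⟨z, rfl, (hzN z hz).1⟩
        · intro _ _
          exact ⟨bar z, rfl, (hzN z hz).2⟩
        · intro _ _
          exact ⟨z, rfl, (hzN z hz).1⟩
        · intro _ _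
          exact ⟨bar z, rfl, (hzN z hz).2⟩
        · intro _ _
          by_cases hwN : w ∈ N
          · exact ⟨w, Set.mem_insert _ _, hwN⟩
          · exact ⟨u, Set.mem_insert_of_mem _ rfl, hiff.mpr hwN⟩
      · obtain ⟨d, hd, rfl⟩ := hr
        intro _ _
        by_cases hwN : w ∈ N
        · exact ⟨w, Set.mem_insert _ _, hwN⟩
        · exact ⟨u, Set.mem_insert_of_mem _ rfl, hiff.mpr hwN⟩
      · simp only [Set.mem_insert_iff, Set.mem_singleton_iff] at hr
        rcases hr with rfl|rfl|rfl
        · intro _ _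
          exact ⟨v, rfl, hvN⟩
        · intro _ _
          exact ⟨v, rfl, hvN⟩
        · intro _ _
          exact ⟨v, rfl, hvN⟩
    rcases hM with rfl | ⟨I, hI, J, hJ, hM⟩
    · -- M = Uall: every head meets Uall
      have hUx : ∀ a ∈ X, a ∈ Uall X Y Z bar u v w := fun a ha => mem_Uall_iff.mpr (Or.inl ha)
      have hUy : ∀ a ∈ Y, a ∈ Uall X Y Z bar u v w :=
        fun a ha => mem_Uall_iff.mpr (Or.inr (Or.inl ha))
      have hUz : ∀ a ∈ Z, a ∈ Uall X Y Z bar u v w :=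
        fun a ha => mem_Uall_iff.mpr (Or.inr (Or.inr (Or.inl ha)))
      have hUbx : ∀ a ∈ X, bar a ∈ Uall X Y Z bar u v w :=
        fun a ha => mem_Uall_iff.mpr (Or.inr (Or.inr (Or.inr (Or.inl ⟨a, ha, rfl⟩))))
      have hUby : ∀ a ∈ Y, bar a ∈ Uall X Y Z bar u v w :=
        fun a ha => mem_Uall_iff.mpr (Or.inr (Or.inr (Or.inr (Or.inr (Or.inl ⟨a, ha, rfl⟩)))))
      have hUbz : ∀ a ∈ Z, bar a ∈ Uall X Y Z bar u v w := fun a ha =>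
        mem_Uall_iff.mpr (Or.inr (Or.inr (Or.inr (Or.inr (Or.inr (Or.inl ⟨a, ha, rfl⟩))))))
      have hUu : u ∈ Uall X Y Z bar u v w := mem_Uall_iff.mpr (by tauto)
      have hUv : v ∈ Uall X Y Z bar u v w := mem_Uall_iff.mpr (by tauto)
      have hUw : w ∈ Uall X Y Z bar u v w := mem_Uall_iff.mpr (by tauto)
      intro r hr
      rcases hr with (((hr|hr)|hr)|hr)|hr
      · obtain ⟨x, hx, h⟩ := hr
        rcases h with rfl|rfl|rfl|rfl|rfl
        · exact fun _ _ => ⟨x, Set.mem_insert _ _, hUx x hx⟩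
        · exact fun _ _ => ⟨u, rfl, hUu⟩
        · exact fun _ _ => ⟨w, rfl, hUw⟩
        · exact fun _ _ => ⟨x, rfl, hUx x hx⟩
        · exact fun _ _ => ⟨bar x, rfl, hUbx x hx⟩
      · obtain ⟨y, hy, h⟩ := hr
        rcases h with rfl|rfl|rfl|rfl|rfl|rfl|rfl
        · exact fun _ _ => ⟨y, Set.mem_insert _ _, hUy y hy⟩
        · exact fun _ _ => ⟨u, rfl, hUu⟩
        · exact fun _ _ => ⟨w, rfl, hUw⟩
        · exact fun _ _ => ⟨y, rfl, hUy y hy⟩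
        · exact fun _ _ => ⟨bar y, rfl, hUby y hy⟩
        · exact fun _ _ => ⟨v, rfl, hUv⟩
        · exact fun _ _ => ⟨v, rfl, hUv⟩
      · obtain ⟨z, hz, h⟩ := hr
        rcases h with rfl|rfl|rfl|rfl|rfl|rfl|rfl|rfl|rfl|rfl
        · exact fun _ _ => ⟨z, Set.mem_insert _ _, hUz z hz⟩
        · exact fun _ _ => ⟨u, rfl, hUu⟩
        · exact fun _ _ => ⟨u, rfl, hUu⟩
        · exact fun _ _ => ⟨v, rfl, hUv⟩
        · exact fun _ _ => ⟨v, rfl, hUv⟩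
        · exact fun _ _ => ⟨z, rfl, hUz z hz⟩
        · exact fun _ _ => ⟨bar z, rfl, hUbz z hz⟩
        · exact fun _ _ => ⟨z, rfl, hUz z hz⟩
        · exact fun _ _ => ⟨bar z, rfl, hUbz z hz⟩
        · exact fun _ _ => ⟨w, Set.mem_insert _ _, hUw⟩
      · obtain ⟨d, hd, rfl⟩ := hr
        exact fun _ _ => ⟨w, Set.mem_insert _ _, hUw⟩
      · simp only [Set.mem_insert_iff, Set.mem_singleton_iff] at hr
        rcases hr with rfl|rfl|rfl
        · exact fun _ _ => ⟨v, rfl, hUv⟩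
        · exact fun _ _ => ⟨v, rfl, hUv⟩
        · exact fun _ _ => ⟨v, rfl, hUv⟩
    · rcases hM with rfl|rfl
      · obtain ⟨fx, fbx, fy, fby, fz, fbz, fp, fq, fnot⟩ :=
          Mfacts u v hufresh hvfresh I J hI hJ
        have hwn : w ∉ Mmod X Y Z bar u v I J := fnot w hwfresh (Ne.symm huw) (Ne.symm hvw)
        refine modelBoth _ fq ⟨fun _ => hwn, fun _ => fp⟩ ?_ ?_ ?_
        · intro x hx
          refine ⟨?_, ?_⟩
          · by_cases h : x ∈ I
            · exact Or.inl ((fx x hx).mpr h)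
            · exact Or.inr ((fbx x hx).mpr h)
          · rintro ⟨h1, h2⟩
            exact (fbx x hx).mp h2 ((fx x hx).mp h1)
        · intro y hy
          refine ⟨?_, ?_⟩
          · by_cases h : y ∈ J
            · exact Or.inl ((fy y hy).mpr h)
            · exact Or.inr ((fby y hy).mpr h)
          · rintro ⟨h1, h2⟩
            exact (fby y hy).mp h2 ((fy y hy).mp h1)
        · exact fun z hz => ⟨fz z hz, fbz z hz⟩
      · obtain ⟨fx, fbx, fy, fby, fz, fbz, fp, fq, fnot⟩ :=
          Mfacts v w hvfresh hwfresh I J hI hJ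
        have hun : u ∉ Mmod X Y Z bar v w I J := fnot u hufresh huv huw
        rw [Mmod'_eq_Mmod]
        refine modelBoth _ fp ⟨fun h => absurd h hun, fun h => absurd fq h⟩ ?_ ?_ ?_
        · intro x hx
          refine ⟨?_, ?_⟩
          · by_cases h : x ∈ I
            · exact Or.inl ((fx x hx).mpr h)
            · exact Or.inr ((fbx x hx).mpr h)
          · rintro ⟨h1, h2⟩
            exact (fbx x hx).mp h2 ((fx x hx).mp h1)
        · intro y hy
          refine ⟨?_, ?_⟩
          · by_cases h : y ∈ J
            · exact Or.inl ((fy y hy).mpr h)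
            · exact Or.inr ((fby y hy).mpr h)
          · rintro ⟨h1, h2⟩
            exact (fby y hy).mp h2 ((fy y hy).mp h1)
        · exact fun z hz => ⟨fz z hz, fbz z hz⟩
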